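/- Assume all relations are ≤, that all off-diagonal elements of every B_k (0 ≤ k ≤ m) are nonnegative, and that the aggregated sparsity pattern graph G of B_0,...,B_m is bipartite. Then η(δ) = ζ(δ) for every δ ∈ ℝ^m. -/

import Mathlib

open Matrix BigOperators

noncomputable section

/-- Trace inner product `⟨A,X⟩ = Σᵢⱼ Aᵢⱼ Xᵢⱼ`. -/
def mInner {N : ℕ} (A X : Matrix (Fin N) (Fin N) ℝ) : ℝ :=
  ∑ i, ∑ j, A i j * X i j

/-- The quadratic function `u ↦ (u,1)ᵀ B (u,1)` on `ℝⁿ`. -/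
def quadF {n : ℕ} (B : Matrix (Fin (n + 1)) (Fin (n + 1)) ℝ) (u : Fin n → ℝ) : ℝ :=
  Fin.snoc u 1 ⬝ᵥ (B *ᵥ Fin.snoc u 1)

/-- A relation on `ℝ` is standard if it is `≤`, `=`, or `≥`. -/
def IsStdRel (r : ℝ → ℝ → Prop) : Prop :=
  r = (· ≤ ·) ∨ r = (· = ·) ∨ r = (· ≥ ·)

section Single

variable (nn m : ℕ) (B : Fin (m + 1) → Matrix (Fin (nn + 1)) (Fin (nn + 1)) ℝ)

/-- Feasibility of `u` for QCQP(δ) (all relations `≤`). -/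
def qcqpFeas (δ : Fin m → ℝ) (u : Fin nn → ℝ) : Prop :=
  ∀ k : Fin m, quadF (B k.succ) u ≤ δ k

/-- The optimal value `ζ(δ)` of QCQP(δ). -/
def qcqpVal (δ : Fin m → ℝ) : EReal :=
  sInf {y : EReal | ∃ u : Fin nn → ℝ,
    qcqpFeas nn m B δ u ∧ y = ((quadF (B 0) u : ℝ) : EReal)}

/-- Feasibility of `X` for the Shor relaxation SDPR(δ). -/
def sdprFeas (δ : Fin m → ℝ) (X : Matrix (Fin (nn + 1)) (Fin (nn + 1)) ℝ) : Prop :=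
  X.PosSemidef ∧ X (Fin.last nn) (Fin.last nn) = 1 ∧
    ∀ k : Fin m, mInner (B k.succ) X ≤ δ k

/-- The optimal value `η(δ)` of SDPR(δ). -/
def sdprVal (δ : Fin m → ℝ) : EReal :=
  sInf {y : EReal | ∃ X : Matrix (Fin (nn + 1)) (Fin (nn + 1)) ℝ,
    sdprFeas nn m B δ X ∧ y = ((mInner (B 0) X : ℝ) : EReal)}

end Single

/-- The aggregated sparsity pattern graph of the matrices `B₀,…,Bₘ`: vertices
`{1,…,n+1}`, with an edge `{i,j}` (`i ≠ j`) whenever some `Bₖ` has a nonzero `(i,j)`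
(or `(j,i)`) entry. -/
def aggGraph (nn m : ℕ) (B : Fin (m + 1) → Matrix (Fin (nn + 1)) (Fin (nn + 1)) ℝ) :
    SimpleGraph (Fin (nn + 1)) where
  Adj i j := i ≠ j ∧ ∃ k, B k i j ≠ 0 ∨ B k j i ≠ 0
  symm := by
    constructor
    rintro i j ⟨hij, k, hk⟩
    exact ⟨hij.symm, k, hk.symm⟩
  loopless := by
    constructor
    rintro i ⟨h, -⟩
    exact h rfl

lemma psd_diag_nonneg {N : ℕ} {X : Matrix (Fin N) (Fin N) ℝ} (hX : X.PosSemidef)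
    (i : Fin N) : 0 ≤ X i i := by
  have := hX.dotProduct_mulVec_nonneg (Pi.single i 1)
  simpa using this

lemma psd_sq_le {N : ℕ} {X : Matrix (Fin N) (Fin N) ℝ} (hX : X.PosSemidef)
    (i j : Fin N) : X i j ^ 2 ≤ X i i * X j j := by
  rcases eq_or_ne i j with rfl | hij
  · rw [sq]
  have hsym : X j i = X i j := by
    have h := hX.1
    have := congrFun (congrFun h i) j
    simpa [Matrix.conjTranspose_apply] using this
  have hq : ∀ t : ℝ, 0 ≤ X i i * (t * t) + (2 * X i j) * t + X j j := by
    intro t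
    have h2 := hX.dotProduct_mulVec_nonneg (t • (Pi.single i 1 : Fin N → ℝ) + Pi.single j 1)
    simp only [star_trivial, Matrix.mulVec_add, Matrix.mulVec_smul,
      Matrix.mulVec_single, mul_one, add_dotProduct, smul_dotProduct,
      single_dotProduct, dotProduct_add, dotProduct_smul,
      smul_eq_mul, Pi.add_apply, Pi.smul_apply] at h2
    have heq : X i i * (t * t) + (2 * X i j) * t + X j j =
        t * (t * X i i + X j i) + (t * X i j + X j j) := by rw [hsym]; ring
    rw [heq]
    convert h2 using 2
    · rfl
    all_goals simp [dotProduct]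
  have hd := discrim_le_zero hq
  rw [discrim] at hd
  nlinarith [hd]

lemma key_le {N : ℕ} (X A : Matrix (Fin N) (Fin N) ℝ) (hX : X.PosSemidef)
    (v : Fin N → ℝ) (hdiag : ∀ i, v i * v i = X i i)
    (hoff : ∀ i j, i ≠ j → A i j ≠ 0 →
      0 ≤ A i j ∧ v i * v j = -(Real.sqrt (X i i) * Real.sqrt (X j j))) :
    v ⬝ᵥ (A *ᵥ v) ≤ mInner A X := by
  have hrw : v ⬝ᵥ (A *ᵥ v) = ∑ i, ∑ j, A i j * (v i * v j) := by
    simp [dotProduct, Matrix.mulVec, Finset.mul_sum]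
    exact Finset.sum_congr rfl fun i _ => Finset.sum_congr rfl fun j _ => by ring
  rw [hrw, mInner]
  refine Finset.sum_le_sum fun i _ => Finset.sum_le_sum fun j _ => ?_
  rcases eq_or_ne i j with rfl | hij
  · rw [hdiag]
  rcases eq_or_ne (A i j) 0 with h0 | h0
  · simp [h0]
  obtain ⟨hA, hv⟩ := hoff i j hij h0
  rw [hv]
  have hb : -(Real.sqrt (X i i) * Real.sqrt (X j j)) ≤ X i j := by
    have h1 := psd_sq_le hX i j
    have h2 : Real.sqrt (X i i) * Real.sqrt (X i i) = X i i :=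
      Real.mul_self_sqrt (psd_diag_nonneg hX i)
    have h3 : Real.sqrt (X j j) * Real.sqrt (X j j) = X j j :=
      Real.mul_self_sqrt (psd_diag_nonneg hX j)
    have ha : 0 ≤ Real.sqrt (X i i) * Real.sqrt (X j j) :=
      mul_nonneg (Real.sqrt_nonneg _) (Real.sqrt_nonneg _)
    have h4 : X i j ^ 2 ≤ (Real.sqrt (X i i) * Real.sqrt (X j j)) ^ 2 := by
      nlinarith [h1, h2, h3]
    have h5 := abs_le_of_sq_le_sq' h4 ha
    linarith [h5.1]
  exact mul_le_mul_of_nonneg_left hb hA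

lemma vecMulVec_psd {N : ℕ} (v : Fin N → ℝ) : (Matrix.vecMulVec v v).PosSemidef := by
  refine Matrix.PosSemidef.of_dotProduct_mulVec_nonneg ?_ ?_
  · ext i j
    simp [Matrix.conjTranspose_apply, Matrix.vecMulVec_apply, mul_comm]
  · intro x
    have : Matrix.vecMulVec v v *ᵥ x = fun i => v i * (v ⬝ᵥ x) := by
      ext i
      simp [Matrix.mulVec, Matrix.vecMulVec_apply, dotProduct, Finset.mul_sum, mul_assoc]
    rw [this]
    have h2 : (x ⬝ᵥ fun i => v i * (v ⬝ᵥ x)) = (x ⬝ᵥ v) * (v ⬝ᵥ x) := by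
      simp only [dotProduct, Finset.sum_mul]
      exact Finset.sum_congr rfl fun k _ => by ring
    simp only [star_trivial]
    rw [h2, dotProduct_comm]
    exact mul_self_nonneg _

lemma mInner_vecMulVec {N : ℕ} (A : Matrix (Fin N) (Fin N) ℝ) (v : Fin N → ℝ) :
    mInner A (Matrix.vecMulVec v v) = v ⬝ᵥ (A *ᵥ v) := by
  simp only [mInner, Matrix.vecMulVec_apply, dotProduct, Matrix.mulVec, Finset.mul_sum]
  exact Finset.sum_congr rfl fun i _ => Finset.sum_congr rfl fun j _ => by ring


/-- **Corollary 4.4 (iii).** If all relations are `≤`, all off-diagonal entries of every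
`Bₖ` are nonnegative, and the aggregated sparsity pattern graph is bipartite
(2-colorable), then `η(δ) = ζ(δ)` for every `δ`. -/
theorem bipartite_nonneg_sdpr_exact
    (nn m : ℕ) (hnn : 0 < nn) (hm : 0 < m)
    (B : Fin (m + 1) → Matrix (Fin (nn + 1)) (Fin (nn + 1)) ℝ)
    (hBsymm : ∀ k, (B k).IsSymm)
    (hBcorner : ∀ k, B k (Fin.last nn) (Fin.last nn) = 0)
    (hoffdiag : ∀ (k : Fin (m + 1)) (i j : Fin (nn + 1)), i ≠ j → 0 ≤ B k i j)
    (hbip : (aggGraph nn m B).Colorable 2) :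
    ∀ δ : Fin m → ℝ, sdprVal nn m B δ = qcqpVal nn m B δ := by
  obtain ⟨C⟩ := hbip
  set s : Fin (nn + 1) → ℝ := fun i => if C i = C (Fin.last nn) then 1 else -1 with hs_def
  have hs_sq : ∀ i, s i * s i = 1 := by
    intro i; by_cases h : C i = C (Fin.last nn) <;> simp [hs_def, h]
  have hs_last : s (Fin.last nn) = 1 := by simp [hs_def]
  have hs_edge : ∀ (i j : Fin (nn + 1)) (k : Fin (m + 1)), i ≠ j → B k i j ≠ 0 →
      s i * s j = -1 := by
    intro i j k hij h0
    have hC : C i ≠ C j := C.valid ⟨hij, k, Or.inl h0⟩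
    have htwo : ∀ a b c : Fin 2, a ≠ c → b ≠ c → a = b := by decide
    by_cases h1 : C i = C (Fin.last nn) <;> by_cases h2 : C j = C (Fin.last nn)
    · exact absurd (h1.trans h2.symm) hC
    · simp [hs_def, h1, h2]
    · simp [hs_def, h1, h2]
    · exact absurd (htwo _ _ _ h1 h2) hC
  intro δ
  apply le_antisymm
  · -- sdprVal ≤ qcqpVal
    apply sInf_le_sInf_of_isCoinitialFor
    rintro y ⟨u, hu, rfl⟩
    set v : Fin (nn + 1) → ℝ := Fin.snoc u 1 with hv_def
    refine ⟨((mInner (B 0) (Matrix.vecMulVec v v) : ℝ) : EReal),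
      ⟨Matrix.vecMulVec v v, ⟨vecMulVec_psd v, ?_, ?_⟩, rfl⟩, ?_⟩
    · simp [Matrix.vecMulVec_apply, hv_def, Fin.snoc_last]
    · intro k
      rw [mInner_vecMulVec]
      exact hu k
    · exact EReal.coe_le_coe_iff.mpr (le_of_eq (mInner_vecMulVec (B 0) v))
  · -- qcqpVal ≤ sdprVal
    apply sInf_le_sInf_of_isCoinitialFor
    rintro y ⟨X, ⟨hPSD, hcorner, hcons⟩, rfl⟩
    set u : Fin nn → ℝ := fun i => s i.castSucc * Real.sqrt (X i.castSucc i.castSucc)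
      with hu_def
    set v : Fin (nn + 1) → ℝ := Fin.snoc u 1 with hv_def
    have hv : ∀ i, v i = s i * Real.sqrt (X i i) := by
      intro i
      refine Fin.lastCases ?_ ?_ i
      · simp [hv_def, Fin.snoc_last, hs_last, hcorner, Real.sqrt_one]
      · intro i; simp [hv_def, hu_def, Fin.snoc_castSucc]
    have hdiag : ∀ i, v i * v i = X i i := by
      intro i
      rw [hv i, mul_mul_mul_comm, hs_sq i, one_mul,
        Real.mul_self_sqrt (psd_diag_nonneg hPSD i)]
    have hkey : ∀ k, quadF (B k) u ≤ mInner (B k) X := by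
      intro k
      have h := key_le X (B k) hPSD v hdiag ?_
      · exact h
      · intro i j hij h0
        refine ⟨hoffdiag k i j hij, ?_⟩
        rw [hv i, hv j, mul_mul_mul_comm, hs_edge i j k hij h0]
        ring
    refine ⟨((quadF (B 0) u : ℝ) : EReal),
      ⟨u, fun k => le_trans (hkey k.succ) (hcons k), rfl⟩, ?_⟩
    exact EReal.coe_le_coe_iff.mpr (hkey 0)
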